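/- Let p₁, p₂ be probability measures on ℕ and 0 < λ₁ ≤ λ₂ be reals. Then the total variation distance between the compound Poisson distributions CPois(λ₁,p₁) and CPois(λ₂,p₂) is at most 1 - e^{-(λ₂-λ₁)} + λ₁·d_TV(p₁,p₂). -/

import Mathlib

open Finset

/-- `j`-fold convolution power of a distribution on ℕ. -/
noncomputable def convPow (ν : ℕ → ℝ) : ℕ → ℕ → ℝ
  | 0, k => if k = 0 then 1 else 0
  | (j + 1), k => ∑ i ∈ Finset.range (k + 1), ν i * convPow ν j (k - i)

/-- Probability mass function of the compound Poisson distribution `CPois(λ, ν)`. -/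
noncomputable def cpois (lam : ℝ) (ν : ℕ → ℝ) (k : ℕ) : ℝ :=
  ∑' j : ℕ, Real.exp (-lam) * lam ^ j / (Nat.factorial j) * convPow ν j k

/-- Total variation distance between two distributions on ℕ. -/
noncomputable def dTV (p q : ℕ → ℝ) : ℝ := (1 / 2) * ∑' k : ℕ, |p k - q k|

noncomputable def pw (lam : ℝ) (j : ℕ) : ℝ := Real.exp (-lam) * lam ^ j / (Nat.factorial j)

lemma pw_nonneg {lam : ℝ} (h : 0 ≤ lam) (j : ℕ) : 0 ≤ pw lam j := by
  unfold pw; positivity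

lemma summable_pw (lam : ℝ) : Summable (pw lam) := by
  unfold pw
  simpa [mul_div_assoc] using (Real.summable_pow_div_factorial lam).mul_left (Real.exp (-lam))

lemma tsum_pw (lam : ℝ) : ∑' j, pw lam j = 1 := by
  unfold pw
  have h : ∑' j : ℕ, lam ^ j / (Nat.factorial j) = Real.exp lam := by
    rw [Real.exp_eq_exp_ℝ, NormedSpace.exp_eq_tsum_div]
  rw [tsum_congr (fun j => mul_div_assoc (Real.exp (-lam)) (lam ^ j) _), tsum_mul_left, h,
    ← Real.exp_add]
  simp

lemma convPow_nonneg {p : ℕ → ℝ} (hp : ∀ k, 0 ≤ p k) : ∀ j k, 0 ≤ convPow p j k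
  | 0, k => by unfold convPow; split <;> norm_num
  | (j+1), k => by
      unfold convPow
      exact Finset.sum_nonneg fun i _ => mul_nonneg (hp i) (convPow_nonneg hp j _)

lemma convPow_summable_tsum {p : ℕ → ℝ} (hs : Summable p)
    (h1 : ∑' k, p k = 1) : ∀ j, Summable (convPow p j) ∧ ∑' k, convPow p j k = 1 := by
  intro j
  induction j with
  | zero =>
      have h : HasSum (fun k : ℕ => if k = 0 then (1:ℝ) else 0) 1 := hasSum_ite_eq 0 1
      constructor
      · exact h.summable.congr fun k => by simp [convPow]
      · rw [tsum_congr (fun k => show convPow p 0 k = if k = 0 then (1:ℝ) else 0 from rfl)]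
        exact h.tsum_eq
  | succ j ih =>
      have hf : Summable fun k => ‖p k‖ := by simpa using hs.abs
      have hg : Summable fun k => ‖convPow p j k‖ := by simpa using ih.1.abs
      have hsum : Summable (convPow p (j+1)) := by
        have := (summable_norm_sum_mul_range_of_summable_norm hf hg).of_norm
        exact this.congr fun n => rfl
      refine ⟨hsum, ?_⟩
      have h := tsum_mul_tsum_eq_tsum_sum_range_of_summable_norm hf hg
      rw [h1, ih.2, one_mul] at h
      exact h.symm ▸ rfl

lemma convPow_le_one {p : ℕ → ℝ} (hp : ∀ k, 0 ≤ p k) (hs : Summable p)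
    (h1 : ∑' k, p k = 1) (j k : ℕ) : convPow p j k ≤ 1 := by
  have h := convPow_summable_tsum hs h1 j
  calc convPow p j k ≤ ∑' m, convPow p j m :=
        h.1.le_tsum k fun m _ => convPow_nonneg hp j m
    _ = 1 := h.2

lemma convPow_dist {p1 p2 : ℕ → ℝ} (h1nn : ∀ k, 0 ≤ p1 k) (h1s : Summable p1)
    (h1sum : ∑' k, p1 k = 1) (h2nn : ∀ k, 0 ≤ p2 k) (h2s : Summable p2)
    (h2sum : ∑' k, p2 k = 1) :
    ∀ j, ∑' k, |convPow p1 j k - convPow p2 j k| ≤ j * ∑' k, |p1 k - p2 k| := by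
  intro j
  induction j with
  | zero =>
      have h0 : ∀ k, convPow p1 0 k - convPow p2 0 k = 0 := fun k => by simp [convPow]
      simp [h0]
  | succ j ih =>
      set c1 := convPow p1 j with hc1
      set c2 := convPow p2 j with hc2
      set d : ℕ → ℝ := fun m => |c1 m - c2 m| with hd
      set e : ℕ → ℝ := fun i => |p1 i - p2 i| with he
      have hds : Summable d := ((convPow_summable_tsum h1s h1sum j).1.sub
        (convPow_summable_tsum h2s h2sum j).1).abs
      have hes : Summable e := (h1s.sub h2s).abs
      have hc2s : Summable c2 := (convPow_summable_tsum h2s h2sum j).1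
      have hnf1 : Summable fun k => ‖p1 k‖ := by simpa using h1s.abs
      have hnd : Summable fun k => ‖d k‖ := by simpa using hds.abs
      have hne : Summable fun k => ‖e k‖ := by simpa using hes.abs
      have hnc2 : Summable fun k => ‖c2 k‖ := by simpa using hc2s.abs
      have hconv1s : Summable fun k => ∑ i ∈ range (k+1), p1 i * d (k - i) :=
        (summable_norm_sum_mul_range_of_summable_norm hnf1 hnd).of_norm
      have hconv2s : Summable fun k => ∑ i ∈ range (k+1), e i * c2 (k - i) :=
        (summable_norm_sum_mul_range_of_summable_norm hne hnc2).of_norm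
      have hpt : ∀ k, |convPow p1 (j+1) k - convPow p2 (j+1) k| ≤
          (∑ i ∈ range (k+1), p1 i * d (k - i)) + ∑ i ∈ range (k+1), e i * c2 (k - i) := by
        intro k
        have h0 : convPow p1 (j+1) k - convPow p2 (j+1) k
            = ∑ i ∈ range (k+1), (p1 i * c1 (k-i) - p2 i * c2 (k-i)) := by
          show (∑ i ∈ range (k+1), p1 i * c1 (k-i)) - (∑ i ∈ range (k+1), p2 i * c2 (k-i)) = _
          rw [← Finset.sum_sub_distrib]
        rw [h0]
        calc |∑ i ∈ range (k+1), (p1 i * c1 (k-i) - p2 i * c2 (k-i))|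
            ≤ ∑ i ∈ range (k+1), |p1 i * c1 (k-i) - p2 i * c2 (k-i)| :=
              Finset.abs_sum_le_sum_abs _ _
          _ ≤ ∑ i ∈ range (k+1), (p1 i * d (k-i) + e i * c2 (k-i)) := by
              apply Finset.sum_le_sum; intro i _
              have hr : p1 i * c1 (k-i) - p2 i * c2 (k-i)
                  = p1 i * (c1 (k-i) - c2 (k-i)) + (p1 i - p2 i) * c2 (k-i) := by ring
              rw [hr]
              refine (abs_add_le _ _).trans ?_
              rw [abs_mul, abs_mul, abs_of_nonneg (h1nn i),
                abs_of_nonneg (convPow_nonneg h2nn j _)]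
          _ = _ := Finset.sum_add_distrib
      have hlhs : Summable fun k => |convPow p1 (j+1) k - convPow p2 (j+1) k| :=
        ((convPow_summable_tsum h1s h1sum (j+1)).1.sub
          (convPow_summable_tsum h2s h2sum (j+1)).1).abs
      have h1' := tsum_mul_tsum_eq_tsum_sum_range_of_summable_norm hnf1 hnd
      have h2' := tsum_mul_tsum_eq_tsum_sum_range_of_summable_norm hne hnc2
      rw [h1sum, one_mul] at h1'
      rw [(convPow_summable_tsum h2s h2sum j).2, mul_one] at h2'
      calc ∑' k, |convPow p1 (j+1) k - convPow p2 (j+1) k|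
          ≤ ∑' k, ((∑ i ∈ range (k+1), p1 i * d (k - i)) + ∑ i ∈ range (k+1), e i * c2 (k - i)) :=
            Summable.tsum_le_tsum hpt hlhs (hconv1s.add hconv2s)
        _ = (∑' k, d k) + ∑' k, e k := by rw [Summable.tsum_add hconv1s hconv2s, ← h1', ← h2']
        _ ≤ j * (∑' k, e k) + ∑' k, e k := by
            have := ih
            gcongr
        _ = (j+1 : ℕ) * ∑' k, e k := by push_cast; ring

lemma pw_conv (a b : ℝ) (j : ℕ) :
    pw (a + b) j = ∑ m ∈ range (j+1), pw a m * pw b (j - m) := by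
  unfold pw
  rw [add_pow, Finset.mul_sum, Finset.sum_div]
  refine Finset.sum_congr rfl fun m hm => ?_
  have hmj : m ≤ j := Nat.lt_succ_iff.mp (Finset.mem_range.mp hm)
  have hfac : ((j.choose m : ℝ)) * (Nat.factorial m) * (Nat.factorial (j - m)) = Nat.factorial j := by
    exact_mod_cast congrArg (Nat.cast (R := ℝ)) (Nat.choose_mul_factorial_mul_factorial hmj)
  have h1 : ((Nat.factorial m : ℝ)) ≠ 0 := by positivity
  have h2 : ((Nat.factorial (j - m) : ℝ)) ≠ 0 := by positivity
  have h3 : ((Nat.factorial j : ℝ)) ≠ 0 := by positivity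
  rw [neg_add, Real.exp_add]
  field_simp
  linear_combination (a ^ m * b ^ (j - m)) * hfac

lemma pw_shift (lam : ℝ) (j : ℕ) : ((j:ℝ)+1) * pw lam (j+1) = lam * pw lam j := by
  unfold pw
  rw [Nat.factorial_succ]
  have h1 : ((Nat.factorial j : ℝ)) ≠ 0 := by positivity
  push_cast
  field_simp
  ring

lemma summable_mul_pw (lam : ℝ) : Summable (fun j : ℕ => (j:ℝ) * pw lam j) := by
  rw [← summable_nat_add_iff 1]
  refine ((summable_pw lam).mul_left lam).congr fun j => ?_
  push_cast
  exact (pw_shift lam j).symm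

lemma tsum_mul_pw (lam : ℝ) : ∑' j : ℕ, (j:ℝ) * pw lam j = lam := by
  rw [Summable.tsum_eq_zero_add (summable_mul_pw lam)]
  simp only [Nat.cast_zero, zero_mul, zero_add]
  have : ∀ j : ℕ, ((j+1 : ℕ):ℝ) * pw lam (j+1) = lam * pw lam j := by
    intro j; push_cast; exact pw_shift lam j
  rw [tsum_congr this, tsum_mul_left, tsum_pw, mul_one]

lemma tsum_abs_pw_sub {lam1 lam2 : ℝ} (h1 : 0 ≤ lam1) (hle : lam1 ≤ lam2) :
    ∑' j, |pw lam1 j - pw lam2 j| ≤ 2 * (1 - Real.exp (-(lam2 - lam1))) := by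
  set δ := lam2 - lam1 with hδdef
  have hδ : 0 ≤ δ := by simp [hδdef]; linarith
  set v : ℕ → ℝ := fun m => if m = 0 then 0 else pw δ m with hv
  have hvnn : ∀ m, 0 ≤ v m := by
    intro m; by_cases h : m = 0 <;> simp [hv, h, pw_nonneg hδ]
  have hvle : ∀ m, v m ≤ pw δ m := by
    intro m; by_cases h : m = 0 <;> simp [hv, h, pw_nonneg hδ, le_refl]
  have hvs : Summable v := Summable.of_nonneg_of_le hvnn hvle (summable_pw δ)
  have hpw0 : pw δ 0 = Real.exp (-δ) := by unfold pw; simp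
  have hvsum : ∑' m, v m = 1 - Real.exp (-δ) := by
    have ha := Summable.tsum_eq_zero_add (summable_pw δ)
    have hb := Summable.tsum_eq_zero_add hvs
    rw [tsum_pw, hpw0] at ha
    have : ∀ m : ℕ, v (m + 1) = pw δ (m + 1) := fun m => by simp [hv]
    rw [hb]
    rw [tsum_congr this]
    simp [hv]
    linarith
  have key : ∀ j, pw lam2 j - pw lam1 j
      = (∑ m ∈ range (j+1), v m * pw lam1 (j - m)) - (1 - Real.exp (-δ)) * pw lam1 j := by
    intro j
    have h2 : pw lam2 j = ∑ m ∈ range (j+1), pw δ m * pw lam1 (j - m) := by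
      have := pw_conv δ lam1 j
      rwa [show δ + lam1 = lam2 by rw [hδdef]; ring] at this
    rw [h2, Finset.sum_range_succ' (fun m => pw δ m * pw lam1 (j - m)) j,
      Finset.sum_range_succ' (fun m => v m * pw lam1 (j - m)) j]
    have : ∀ i, v (i + 1) * pw lam1 (j - (i+1)) = pw δ (i+1) * pw lam1 (j - (i+1)) := by
      intro i; simp [hv]
    rw [Finset.sum_congr rfl fun i _ => this i]
    simp [hv, hpw0]
    ring
  have hpt : ∀ j, |pw lam1 j - pw lam2 j| ≤
      (∑ m ∈ range (j+1), v m * pw lam1 (j - m)) + (1 - Real.exp (-δ)) * pw lam1 j := by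
    intro j
    rw [abs_sub_comm, key j]
    refine (abs_sub _ _).trans ?_
    gcongr
    · rw [abs_of_nonneg]
      exact Finset.sum_nonneg fun m _ => mul_nonneg (hvnn m) (pw_nonneg h1 _)
    · rw [abs_of_nonneg]
      have : Real.exp (-δ) ≤ 1 := Real.exp_le_one_iff.mpr (by linarith)
      exact mul_nonneg (by linarith) (pw_nonneg h1 _)
  have hnv : Summable fun m => ‖v m‖ := by simpa using hvs.abs
  have hnp : Summable fun m => ‖pw lam1 m‖ := by simpa using (summable_pw lam1).abs
  have hconvs : Summable fun j => ∑ m ∈ range (j+1), v m * pw lam1 (j - m) :=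
    (summable_norm_sum_mul_range_of_summable_norm hnv hnp).of_norm
  have hconvsum := tsum_mul_tsum_eq_tsum_sum_range_of_summable_norm hnv hnp
  rw [hvsum, tsum_pw, mul_one] at hconvsum
  have hlhs : Summable fun j => |pw lam1 j - pw lam2 j| :=
    ((summable_pw lam1).sub (summable_pw lam2)).abs
  have hrhs : Summable fun j => (∑ m ∈ range (j+1), v m * pw lam1 (j - m))
      + (1 - Real.exp (-δ)) * pw lam1 j :=
    hconvs.add ((summable_pw lam1).mul_left _)
  calc ∑' j, |pw lam1 j - pw lam2 j|
      ≤ ∑' j, ((∑ m ∈ range (j+1), v m * pw lam1 (j - m)) + (1 - Real.exp (-δ)) * pw lam1 j) :=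
        Summable.tsum_le_tsum hpt hlhs hrhs
    _ = (1 - Real.exp (-δ)) + (1 - Real.exp (-δ)) := by
        rw [Summable.tsum_add hconvs ((summable_pw lam1).mul_left _), ← hconvsum, tsum_mul_left, tsum_pw,
          mul_one]
    _ = 2 * (1 - Real.exp (-δ)) := by ring

/-- coupling bound on the total variation distance between two
compound Poisson distributions. -/
theorem stmt2 (p1 p2 : ℕ → ℝ)
    (h1nn : ∀ k, 0 ≤ p1 k) (h1sum : ∑' k : ℕ, p1 k = 1)
    (h2nn : ∀ k, 0 ≤ p2 k) (h2sum : ∑' k : ℕ, p2 k = 1)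
    (lam1 lam2 : ℝ) (hl : 0 < lam1) (hle : lam1 ≤ lam2) :
    dTV (cpois lam1 p1) (cpois lam2 p2) ≤
      1 - Real.exp (-(lam2 - lam1)) + lam1 * dTV p1 p2 := by
  have hl1 : 0 ≤ lam1 := hl.le
  have hl2 : 0 ≤ lam2 := hl1.trans hle
  have h1s : Summable p1 := by
    by_contra h
    rw [tsum_eq_zero_of_not_summable h] at h1sum; norm_num at h1sum
  have h2s : Summable p2 := by
    by_contra h
    rw [tsum_eq_zero_of_not_summable h] at h2sum; norm_num at h2sum
  set c1 : ℕ → ℕ → ℝ := convPow p1 with hc1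
  set c2 : ℕ → ℕ → ℝ := convPow p2 with hc2
  set D : ℝ := ∑' k, |p1 k - p2 k| with hD
  have hDnn : 0 ≤ D := tsum_nonneg fun k => abs_nonneg _
  set h : ℕ → ℕ → ℝ := fun j k =>
    pw lam1 j * |c1 j k - c2 j k| + |pw lam1 j - pw lam2 j| * c2 j k with hh
  have hhnn : ∀ j k, 0 ≤ h j k := fun j k =>
    add_nonneg (mul_nonneg (pw_nonneg hl1 j) (abs_nonneg _))
      (mul_nonneg (abs_nonneg _) (convPow_nonneg h2nn j k))
  -- summability of slices in k for fixed j
  have hds : ∀ j, Summable fun k => |c1 j k - c2 j k| := fun j =>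
    ((convPow_summable_tsum h1s h1sum j).1.sub (convPow_summable_tsum h2s h2sum j).1).abs
  have hslice_k : ∀ j, Summable fun k => h j k := by
    intro j
    exact ((hds j).mul_left _).add ((convPow_summable_tsum h2s h2sum j).1.mul_left _)
  -- the value of the slice sums
  have hSval : ∀ j, ∑' k, h j k
      = pw lam1 j * (∑' k, |c1 j k - c2 j k|) + |pw lam1 j - pw lam2 j| := by
    intro j
    rw [Summable.tsum_add ((hds j).mul_left _) ((convPow_summable_tsum h2s h2sum j).1.mul_left _),
      tsum_mul_left, tsum_mul_left, (convPow_summable_tsum h2s h2sum j).2, mul_one]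
  set M : ℕ → ℝ := fun j => pw lam1 j * ((j : ℝ) * D) + |pw lam1 j - pw lam2 j| with hM
  have hMs : Summable M := by
    refine Summable.add ?_ (((summable_pw lam1).sub (summable_pw lam2)).abs)
    exact ((summable_mul_pw lam1).mul_right D).congr fun j => by ring
  have hSleM : ∀ j, ∑' k, h j k ≤ M j := by
    intro j
    rw [hSval j]
    have := convPow_dist h1nn h1s h1sum h2nn h2s h2sum j
    have h' : ∑' k, |c1 j k - c2 j k| ≤ (j : ℝ) * D := this
    have := mul_le_mul_of_nonneg_left h' (pw_nonneg hl1 j)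
    simp only [hM]
    linarith
  have hSs : Summable fun j => ∑' k, h j k :=
    Summable.of_nonneg_of_le (fun j => tsum_nonneg fun k => hhnn j k) hSleM hMs
  -- product summability and Fubini
  have hprod : Summable (Function.uncurry h) := by
    refine (summable_prod_of_nonneg ?_).mpr ⟨fun j => hslice_k j, hSs⟩
    intro q; exact hhnn q.1 q.2
  have hHs : Summable fun k => ∑' j, h j k := by
    have := (summable_prod_of_nonneg (f := fun q : ℕ × ℕ => h q.2 q.1) ?_).mp hprod.prod_symm
    · exact this.2
    · intro q; exact hhnn q.2 q.1
  have hfub : ∑' k, ∑' j, h j k = ∑' j, ∑' k, h j k := Summable.tsum_comm hprod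
  -- pointwise bound on |cpois difference|
  have hcp : ∀ (lam : ℝ) (ν : ℕ → ℝ) (k : ℕ), cpois lam ν k = ∑' j, pw lam j * convPow ν j k :=
    fun lam ν k => rfl
  have hA1 : ∀ k, Summable fun j => pw lam1 j * c1 j k := by
    intro k
    refine Summable.of_nonneg_of_le
      (fun j => mul_nonneg (pw_nonneg hl1 j) (convPow_nonneg h1nn j k))
      (fun j => ?_) (summable_pw lam1)
    exact mul_le_of_le_one_right (pw_nonneg hl1 j) (convPow_le_one h1nn h1s h1sum j k)
  have hA2 : ∀ k, Summable fun j => pw lam2 j * c2 j k := by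
    intro k
    refine Summable.of_nonneg_of_le
      (fun j => mul_nonneg (pw_nonneg hl2 j) (convPow_nonneg h2nn j k))
      (fun j => ?_) (summable_pw lam2)
    exact mul_le_of_le_one_right (pw_nonneg hl2 j) (convPow_le_one h2nn h2s h2sum j k)
  have hslice_j : ∀ k, Summable fun j => h j k := fun k => hprod.prod_symm.prod_factor k
  have hpt : ∀ k, |cpois lam1 p1 k - cpois lam2 p2 k| ≤ ∑' j, h j k := by
    intro k
    rw [hcp, hcp, ← Summable.tsum_sub (hA1 k) (hA2 k)]
    have habs : Summable fun j => ‖pw lam1 j * c1 j k - pw lam2 j * c2 j k‖ := by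
      simpa using ((hA1 k).sub (hA2 k)).abs
    refine (le_trans ?_ (Summable.tsum_le_tsum ?_ habs.of_norm.abs (hslice_j k)))
    · have := norm_tsum_le_tsum_norm habs
      simpa using this
    · intro j
      have hr : pw lam1 j * c1 j k - pw lam2 j * c2 j k
          = pw lam1 j * (c1 j k - c2 j k) + (pw lam1 j - pw lam2 j) * c2 j k := by ring
      rw [hr]
      refine (abs_add_le _ _).trans ?_
      rw [abs_mul, abs_mul, abs_of_nonneg (pw_nonneg hl1 j),
        abs_of_nonneg (convPow_nonneg h2nn j k)]
  -- final computation
  have hlhs : Summable fun k => |cpois lam1 p1 k - cpois lam2 p2 k| :=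
    Summable.of_nonneg_of_le (fun k => abs_nonneg _) hpt hHs
  have hMtsum : ∑' j, M j ≤ lam1 * D + 2 * (1 - Real.exp (-(lam2 - lam1))) := by
    have hsplit : ∑' j, M j = (∑' j, pw lam1 j * ((j:ℝ) * D)) + ∑' j, |pw lam1 j - pw lam2 j| := by
      exact Summable.tsum_add (((summable_mul_pw lam1).mul_right D).congr fun j => by ring)
        (((summable_pw lam1).sub (summable_pw lam2)).abs)
    have h1' : ∑' j, pw lam1 j * ((j:ℝ) * D) = lam1 * D := by
      have : ∀ j : ℕ, pw lam1 j * ((j:ℝ) * D) = ((j:ℝ) * pw lam1 j) * D := fun j => by ring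
      rw [tsum_congr this, tsum_mul_right, tsum_mul_pw]
    rw [hsplit, h1']
    have := tsum_abs_pw_sub hl1 hle
    linarith
  have hmain : ∑' k, |cpois lam1 p1 k - cpois lam2 p2 k|
      ≤ lam1 * D + 2 * (1 - Real.exp (-(lam2 - lam1))) := by
    calc ∑' k, |cpois lam1 p1 k - cpois lam2 p2 k| ≤ ∑' k, ∑' j, h j k :=
          Summable.tsum_le_tsum hpt hlhs hHs
      _ = ∑' j, ∑' k, h j k := hfub
      _ ≤ ∑' j, M j := Summable.tsum_le_tsum hSleM hSs hMs
      _ ≤ _ := hMtsum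
  unfold dTV
  rw [← hD]
  linarith
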